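/- Let ℓ ≥ 1, σ > 0, and let X = (X_1,…,X_ℓ) be a random vector whose law is the ℓ-fold product of the Gaussian measure N(0,σ²) on ℝ (i.e., the coordinates are i.i.d. centered Gaussians with variance σ²). Then for all μ, μ' ∈ ℝ^ℓ with ‖μ‖ ≤ ‖μ'‖ (Euclidean norms) and every z ≥ 0, P(‖X + μ'‖ ≤ z) ≤ P(‖X + μ‖ ≤ z). -/

import Mathlib

open MeasureTheory ProbabilityTheory RealInnerProductSpace
open scoped ENNReal NNReal Real

set_option maxHeartbeats 1000000

noncomputable section GaussAnderson

namespace GaussAnderson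

lemma lintegral_pi_prod {ι : Type*} [Fintype ι] [DecidableEq ι] {κ : ι → Type*}
    [∀ i, MeasurableSpace (κ i)] [Nonempty (∀ i, κ i)]
    (μ : ∀ i, Measure (κ i)) [∀ i, SigmaFinite (μ i)]
    (g : ∀ i, κ i → ℝ≥0∞) (hg : ∀ i, Measurable (g i)) :
    ∫⁻ x, ∏ i, g i (x i) ∂Measure.pi μ = ∏ i, ∫⁻ t, g i t ∂μ i := by
  have hmeas : Measurable fun x : ∀ i, κ i => ∏ i, g i (x i) :=
    Finset.measurable_prod _ fun i _ => (hg i).comp (measurable_pi_apply i)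
  have main : ∀ s : Finset ι, ∀ x : ∀ i, κ i,
      (∫⋯∫⁻_s, (fun y => ∏ i, g i (y i)) ∂μ) x =
        (∏ i ∈ s, ∫⁻ t, g i t ∂μ i) * ∏ i ∈ sᶜ, g i (x i) := by
    intro s
    induction s using Finset.induction_on with
    | empty => intro x; simp
    | @insert i s his ih =>
      intro x
      rw [lmarginal_insert _ hmeas his]
      have hi_mem : i ∈ sᶜ := Finset.mem_compl.mpr his
      have hstep : ∀ xi : κ i,
          (∫⋯∫⁻_s, (fun y => ∏ j, g j (y j)) ∂μ) (Function.update x i xi) =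
            ((∏ j ∈ s, ∫⁻ t, g j t ∂μ j) * ∏ j ∈ sᶜ.erase i, g j (x j)) * g i xi := by
        intro xi
        rw [ih]
        have : ∏ j ∈ sᶜ, g j (Function.update x i xi j) =
            g i xi * ∏ j ∈ sᶜ.erase i, g j (x j) := by
          rw [← Finset.mul_prod_erase _ _ hi_mem, Function.update_self]
          congr 1
          exact Finset.prod_congr rfl fun j hj =>
            congrArg _ (Function.update_of_ne (Finset.ne_of_mem_erase hj) _ _)
        rw [this]
        ring
      simp_rw [hstep]
      rw [lintegral_const_mul _ (hg i), Finset.prod_insert his, Finset.compl_insert]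
      ring
  inhabit (∀ i, κ i)
  rw [lintegral_eq_lmarginal_univ (default : ∀ i, κ i), main]
  simp

lemma gauss_pi_eq {ℓ : ℕ} (v : ℝ≥0) (hv : v ≠ 0) :
    Measure.pi (fun _ : Fin ℓ => gaussianReal 0 v) =
      (volume : Measure (Fin ℓ → ℝ)).withDensity (fun x => ∏ i, gaussianPDF 0 v (x i)) := by
  refine Measure.pi_eq (μ := fun _ : Fin ℓ => gaussianReal 0 v) fun s hs => ?_
  rw [withDensity_apply _ (MeasurableSet.univ_pi hs)]
  have hind : ∀ x : Fin ℓ → ℝ,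
      (Set.univ.pi s).indicator (fun x => ∏ i, gaussianPDF 0 v (x i)) x =
        ∏ i, (s i).indicator (gaussianPDF 0 v) (x i) := by
    intro x
    by_cases hx : x ∈ Set.univ.pi s
    · rw [Set.indicator_of_mem hx]
      exact Finset.prod_congr rfl fun i _ =>
        (Set.indicator_of_mem (hx i trivial) _).symm
    · rw [Set.indicator_of_notMem hx]
      obtain ⟨i, hi⟩ : ∃ i, x i ∉ s i := by simpa [Set.mem_pi] using hx
      exact (Finset.prod_eq_zero (Finset.mem_univ i) (Set.indicator_of_notMem hi _)).symm
  rw [← lintegral_indicator (MeasurableSet.univ_pi hs)]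
  simp_rw [hind]
  rw [volume_pi, lintegral_pi_prod _ _ (fun i => (measurable_gaussianPDF 0 v).indicator (hs i))]
  exact Finset.prod_congr rfl fun i _ => by
    rw [lintegral_indicator (hs i), gaussianReal_apply 0 hv]

lemma gauss_aux {n : ℕ} (g : ℝ → ℝ≥0∞) (hg : Antitone g) (hgm : Measurable g)
    (a b : EuclideanSpace ℝ (Fin n)) (hab : ‖a‖ ≤ ‖b‖) (z : ℝ) :
    volume.withDensity (fun x => g (‖x‖ ^ 2)) (Metric.closedBall b z) ≤
      volume.withDensity (fun x => g (‖x‖ ^ 2)) (Metric.closedBall a z) := by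
  by_cases hba : b = a
  · rw [hba]
  set w : EuclideanSpace ℝ (Fin n) := b - a with hw_def
  have hw : w ≠ 0 := sub_ne_zero.mpr hba
  have hnw : (0:ℝ) < ‖w‖ := norm_pos_iff.mpr hw
  set u : EuclideanSpace ℝ (Fin n) := ‖w‖⁻¹ • w with hu_def
  have hu : ‖u‖ = 1 := by
    rw [hu_def, norm_smul, norm_inv, norm_norm, inv_mul_cancel₀ hnw.ne']
  have hw_u : w = ‖w‖ • u := by
    rw [hu_def, smul_smul, mul_inv_cancel₀ hnw.ne', one_smul]
  set c : EuclideanSpace ℝ (Fin n) := (2:ℝ)⁻¹ • (a + b) with hc_def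
  set R : EuclideanSpace ℝ (Fin n) → EuclideanSpace ℝ (Fin n) :=
    fun x => x - (2 * ⟪u, x - c⟫) • u with hR_def
  have hRcomp : R = (fun y : EuclideanSpace ℝ (Fin n) => y + c) ∘ (Submodule.reflection ((ℝ ∙ u)ᗮ)) ∘
      (fun x : EuclideanSpace ℝ (Fin n) => x - c) := by
    funext x
    simp only [Function.comp_apply, hR_def]
    rw [Submodule.reflection_orthogonal_apply, Submodule.reflection_singleton_apply]
    simp only [hu]
    push_cast
    norm_num
    module
  have hRmp : MeasurePreserving R (volume : Measure (EuclideanSpace ℝ (Fin n))) volume := by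
    rw [hRcomp]
    exact (measurePreserving_add_right volume c).comp
      ((Submodule.reflection ((ℝ ∙ u)ᗮ)).measurePreserving.comp (measurePreserving_sub_right volume c))
  have hRinv : Function.Involutive R := by
    rw [hRcomp]
    intro x
    simp only [Function.comp_apply, add_sub_cancel_right, Submodule.reflection_reflection, sub_add_cancel]
  have hca : c - a = (‖w‖/2) • u := by
    have h0 : c - a = (2:ℝ)⁻¹ • w := by rw [hc_def, hw_def]; module
    have h1 : (‖w‖/2) • u = (2:ℝ)⁻¹ • w := by
      rw [hu_def, smul_smul]
      congr 1
      field_simp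
    rw [h0, h1]
  have hcb : c - b = -((‖w‖/2) • u) := by
    have h0 : c - b = -(c - a) := by rw [hc_def]; module
    rw [h0, hca]
  have huc : ⟪u, c⟫ * (2 * ‖w‖) = ‖b‖^2 - ‖a‖^2 := by
    have hinv : ‖w‖⁻¹ * ‖w‖ = 1 := inv_mul_cancel₀ hnw.ne'
    have h2 : (2:ℝ) * ⟪u, c⟫ = ⟪u, a + b⟫ := by
      rw [hc_def, real_inner_smul_right]; ring
    have h3 : ⟪w, a + b⟫ = ‖b‖^2 - ‖a‖^2 := by
      rw [hw_def, inner_sub_left, inner_add_right, inner_add_right,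
        real_inner_self_eq_norm_sq, real_inner_self_eq_norm_sq, real_inner_comm a b]
      ring
    have h4 : ⟪u, a + b⟫ = ‖w‖⁻¹ * ⟪w, a + b⟫ := by
      rw [hu_def, real_inner_smul_left]
    rw [← h3]
    linear_combination ‖w‖ * h2 + ‖w‖ * h4 + ⟪w, a + b⟫ * hinv
  have hucnn : 0 ≤ ⟪u, c⟫ := by
    nlinarith [norm_nonneg a, norm_nonneg b]
  have sq_sub : ∀ (p : EuclideanSpace ℝ (Fin n)) (s : ℝ),
      ‖p - s • u‖^2 = ‖p‖^2 - 2*(s * ⟪u, p⟫) + s^2 := by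
    intro p s
    rw [norm_sub_sq_real, real_inner_smul_right, norm_smul, mul_pow, real_inner_comm]
    simp only [norm_norm, Real.norm_eq_abs, sq_abs, hu]
    ring
  have expand : ∀ (x p : EuclideanSpace ℝ (Fin n)) (s : ℝ), c - p = s • u →
      ‖x - p‖^2 = ‖x - c‖^2 - 2*((-s) * ⟪u, x - c⟫) + s^2 := by
    intro x p s hs
    have h : x - p = (x - c) - (-s) • u := by
      rw [neg_smul, sub_neg_eq_add, ← hs]; abel
    rw [h, sq_sub]
    ring
  have key2a : ∀ x, ‖R x - a‖^2 = ‖x - b‖^2 := by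
    intro x
    have h1 : R x - a = (x - c) - (2 * ⟪u, x - c⟫ - ‖w‖/2) • u := by
      rw [hR_def]
      simp only
      rw [sub_smul, ← hca]
      abel
    have h2 := expand x b (-(‖w‖/2)) (by rw [hcb]; module)
    rw [h1, sq_sub, h2]
    ring
  have key2b : ∀ x, ‖R x - b‖^2 = ‖x - a‖^2 := by
    intro x
    have h1 : R x - b = (x - c) - (2 * ⟪u, x - c⟫ + ‖w‖/2) • u := by
      rw [hR_def]
      simp only
      rw [add_smul, ← neg_neg ((‖w‖/2) • u), ← hcb]
      abel
    have h2 := expand x a (‖w‖/2) hca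
    rw [h1, sq_sub, h2]
    ring
  have key1 : ∀ x : EuclideanSpace ℝ (Fin n),
      ‖x - a‖^2 - ‖x - b‖^2 = 2 * ⟪u, x - c⟫ * ‖w‖ := by
    intro x
    have h2 := expand x a (‖w‖/2) hca
    have h3 := expand x b (-(‖w‖/2)) (by rw [hcb]; module)
    rw [h2, h3]
    ring
  have key3 : ∀ x : EuclideanSpace ℝ (Fin n), 0 ≤ ⟪u, x - c⟫ → ‖R x‖^2 ≤ ‖x‖^2 := by
    intro x ht
    have h1 : ⟪u, x⟫ = ⟪u, x - c⟫ + ⟪u, c⟫ := by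
      rw [← inner_add_right]
      congr 1
      abel
    have h2 : ‖R x‖^2 = ‖x‖^2 - 2*((2 * ⟪u, x - c⟫) * ⟪u, x⟫) + (2 * ⟪u, x - c⟫)^2 := by
      rw [hR_def]
      simp only
      rw [sq_sub]
    nlinarith [h2, h1]
  have norm2a : ∀ x, ‖R x - a‖ = ‖x - b‖ := by
    intro x
    have := congrArg Real.sqrt (key2a x)
    rwa [Real.sqrt_sq (norm_nonneg _), Real.sqrt_sq (norm_nonneg _)] at this
  have norm2b : ∀ x, ‖R x - b‖ = ‖x - a‖ := by
    intro x
    have := congrArg Real.sqrt (key2b x)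
    rwa [Real.sqrt_sq (norm_nonneg _), Real.sqrt_sq (norm_nonneg _)] at this
  set f : EuclideanSpace ℝ (Fin n) → ℝ≥0∞ := fun x => g (‖x‖ ^ 2) with hf_def
  have hf : Measurable f := hgm.comp (measurable_norm.pow_const 2)
  set Ba := Metric.closedBall a z
  set Bb := Metric.closedBall b z
  have hBa : MeasurableSet Ba := measurableSet_closedBall
  have hBb : MeasurableSet Bb := measurableSet_closedBall
  set S := Bb \ Ba with hS_def
  have hS : MeasurableSet S := hBb.diff hBa
  set T := R ⁻¹' S with hT_def
  have hT : MeasurableSet T := hS.preimage hRmp.measurable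
  have hTsub : T ⊆ Ba \ Bb := by
    intro x hx
    obtain ⟨h1, h2⟩ := hx
    constructor
    · rw [Metric.mem_closedBall, dist_eq_norm] at h1 ⊢
      rwa [norm2b x] at h1
    · rw [Metric.mem_closedBall, dist_eq_norm] at h2 ⊢
      rwa [norm2a x] at h2
  set γ := (volume : Measure (EuclideanSpace ℝ (Fin n))).withDensity f with hγ_def
  have hγS : γ S ≤ γ T := by
    have h1 : γ S = ∫⁻ x in S, f x := withDensity_apply f hS
    have h2 : γ T = ∫⁻ x in T, f x := withDensity_apply f hT
    have hpre : R ⁻¹' T = S := by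
      ext x
      simp only [hT_def, Set.mem_preimage, hRinv x]
    have h3 : ∫⁻ x in S, f (R x) = ∫⁻ y in T, f y := by
      rw [← hpre]
      exact hRmp.setLIntegral_comp_preimage hT hf
    have h4 : ∫⁻ x in S, f x ≤ ∫⁻ x in S, f (R x) := by
      apply setLIntegral_mono (hf.comp hRmp.measurable)
      intro x hx
      obtain ⟨hx1, hx2⟩ := hx
      rw [Metric.mem_closedBall, dist_eq_norm] at hx1
      have hx2' : z < ‖x - a‖ := by
        rw [Metric.mem_closedBall, dist_eq_norm] at hx2
        exact lt_of_not_ge hx2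
      have ht : 0 ≤ ⟪u, x - c⟫ := by
        have hlt : ‖x - b‖^2 ≤ ‖x - a‖^2 := by
          have h0 : (0:ℝ) ≤ ‖x - b‖ := norm_nonneg _
          nlinarith
        have := key1 x
        nlinarith
      have := key3 x ht
      exact hg this
    rw [h1, h2, ← h3]
    exact h4
  calc γ Bb = γ (Bb ∩ Ba) + γ (Bb \ Ba) := (measure_inter_add_diff Bb hBa).symm
    _ ≤ γ (Bb ∩ Ba) + γ T := add_le_add_right hγS _
    _ ≤ γ (Bb ∩ Ba) + γ (Ba \ Bb) := add_le_add_right (measure_mono hTsub) _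
    _ = γ (Ba ∩ Bb) + γ (Ba \ Bb) := by rw [Set.inter_comm]
    _ = γ Ba := measure_inter_add_diff Ba hBb

end GaussAnderson

end GaussAnderson

/-- For a random vector `X` with i.i.d. `N(0,σ²)` coordinates (law given by the `ℓ`-fold
product of the Gaussian measure), the probability `P(‖X + μ‖ ≤ z)` (Euclidean norm) is
nonincreasing in `‖μ‖`: if `‖μ‖ ≤ ‖μ'‖` then `P(‖X + μ'‖ ≤ z) ≤ P(‖X + μ‖ ≤ z)`. -/
theorem gaussian_shifted_ball_prob_anti {ℓ : ℕ} (hℓ : 1 ≤ ℓ)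
    (σ : ℝ) (hσ : 0 < σ)
    (μ μ' : Fin ℓ → ℝ)
    (hμ : Real.sqrt (∑ i, (μ i) ^ 2) ≤ Real.sqrt (∑ i, (μ' i) ^ 2))
    (z : ℝ) (hz : 0 ≤ z) :
    (Measure.pi fun _ : Fin ℓ => gaussianReal 0 ⟨σ ^ 2, sq_nonneg σ⟩)
        {x : Fin ℓ → ℝ | Real.sqrt (∑ i, (x i + μ' i) ^ 2) ≤ z} ≤
      (Measure.pi fun _ : Fin ℓ => gaussianReal 0 ⟨σ ^ 2, sq_nonneg σ⟩)
        {x : Fin ℓ → ℝ | Real.sqrt (∑ i, (x i + μ i) ^ 2) ≤ z} := by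
  classical
  have hσ2 : (0:ℝ) < σ ^ 2 := by positivity
  have hv : (⟨σ ^ 2, sq_nonneg σ⟩ : ℝ≥0) ≠ 0 := by
    intro h
    have : ((⟨σ ^ 2, sq_nonneg σ⟩ : ℝ≥0) : ℝ) = 0 := by rw [h]; rfl
    exact hσ2.ne' this
  -- the radial density
  set g : ℝ → ℝ≥0∞ := fun t => ENNReal.ofReal ((Real.sqrt (2 * π * σ^2))⁻¹ ^ ℓ *
    Real.exp (-t / (2 * σ^2))) with hg_def
  have hg_anti : Antitone g := by
    intro s t hst
    rw [hg_def]
    apply ENNReal.ofReal_le_ofReal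
    apply mul_le_mul_of_nonneg_left _ (by positivity)
    apply Real.exp_le_exp.mpr
    rw [div_le_div_iff_of_pos_right (by positivity : (0:ℝ) < 2 * σ^2)]
    linarith
  have hg_meas : Measurable g := by
    apply ENNReal.measurable_ofReal.comp
    fun_prop
  -- the product density equals the radial density
  have hdens : ∀ x : Fin ℓ → ℝ, ∏ i, gaussianPDF 0 ⟨σ ^ 2, sq_nonneg σ⟩ (x i) = g (∑ i, (x i)^2) := by
    intro x
    have hnn : ∀ i : Fin ℓ, 0 ≤ gaussianPDFReal 0 ⟨σ ^ 2, sq_nonneg σ⟩ (x i) :=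
      fun i => gaussianPDFReal_nonneg _ _ _
    rw [show (∏ i, gaussianPDF 0 ⟨σ ^ 2, sq_nonneg σ⟩ (x i)) =
        ENNReal.ofReal (∏ i, gaussianPDFReal 0 ⟨σ ^ 2, sq_nonneg σ⟩ (x i)) from ?_]
    · rw [hg_def]
      congr 1
      unfold gaussianPDFReal
      push_cast
      rw [Finset.prod_mul_distrib, Finset.prod_const, ← Real.exp_sum]
      congr 2
      · norm_num
      rw [← Finset.sum_div, ← Finset.sum_neg_distrib]
      congr 1
      refine Finset.sum_congr rfl fun i _ => ?_
      push_cast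
      ring
    · rw [show (fun i : Fin ℓ => gaussianPDF 0 ⟨σ ^ 2, sq_nonneg σ⟩ (x i)) =
          (fun i => ENNReal.ofReal (gaussianPDFReal 0 ⟨σ ^ 2, sq_nonneg σ⟩ (x i))) from rfl,
        ← ENNReal.ofReal_prod_of_nonneg (fun i _ => hnn i)]
  -- rewrite the pi measure
  rw [GaussAnderson.gauss_pi_eq ⟨σ ^ 2, sq_nonneg σ⟩ hv]
  have hdens' : (fun x : Fin ℓ → ℝ => ∏ i, gaussianPDF 0 ⟨σ ^ 2, sq_nonneg σ⟩ (x i)) =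
      fun x => g (∑ i, (x i)^2) := funext hdens
  rw [hdens']
  -- measurability of the two sets
  have hmeasset : ∀ m : Fin ℓ → ℝ, MeasurableSet
      {x : Fin ℓ → ℝ | Real.sqrt (∑ i, (x i + m i) ^ 2) ≤ z} := by
    intro m
    apply measurableSet_le _ measurable_const
    fun_prop
  -- transfer to EuclideanSpace
  have transfer : ∀ T : Set (Fin ℓ → ℝ), MeasurableSet T →
      (volume : Measure (Fin ℓ → ℝ)).withDensity (fun x => g (∑ i, (x i)^2)) T =
        (volume : Measure (EuclideanSpace ℝ (Fin ℓ))).withDensity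
          (fun x => g (‖x‖^2)) (((MeasurableEquiv.toLp 2 (Fin ℓ → ℝ)).symm) ⁻¹' T) := by
    intro T hT
    have hgm1 : Measurable fun x : Fin ℓ → ℝ => g (∑ i, (x i)^2) := by
      apply hg_meas.comp
      fun_prop
    have hgm2 : Measurable fun x : EuclideanSpace ℝ (Fin ℓ) => g (‖x‖^2) :=
      hg_meas.comp (measurable_norm.pow_const 2)
    rw [withDensity_apply _ hT,
      withDensity_apply _ (hT.preimage ((MeasurableEquiv.toLp 2 (Fin ℓ → ℝ)).symm).measurable),
      ← (EuclideanSpace.volume_preserving_symm_measurableEquiv_toLp (Fin ℓ)).map_eq,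
      setLIntegral_map hT hgm1 ((MeasurableEquiv.toLp 2 (Fin ℓ → ℝ)).symm).measurable]
    refine setLIntegral_congr_fun (hT.preimage ((MeasurableEquiv.toLp 2 (Fin ℓ → ℝ)).symm).measurable)
      (fun x _ => ?_)
    congr 1
    have hnorm : ‖x‖^2 = ∑ i, (x i)^2 := by
      rw [EuclideanSpace.norm_eq]
      rw [Real.sq_sqrt (by positivity)]
      exact Finset.sum_congr rfl fun i _ => by rw [Real.norm_eq_abs, sq_abs]
    rw [hnorm]
    rfl
  rw [transfer _ (hmeasset μ'), transfer _ (hmeasset μ)]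
  -- identify with closed balls
  have hball : ∀ m : Fin ℓ → ℝ,
      ((MeasurableEquiv.toLp 2 (Fin ℓ → ℝ)).symm) ⁻¹'
          {x : Fin ℓ → ℝ | Real.sqrt (∑ i, (x i + m i) ^ 2) ≤ z} =
        Metric.closedBall ((EuclideanSpace.equiv (Fin ℓ) ℝ).symm (fun i => -(m i))) z := by
    intro m
    ext x
    simp only [Set.mem_preimage, Set.mem_setOf_eq, Metric.mem_closedBall, dist_eq_norm]
    have : ‖x - ((EuclideanSpace.equiv (Fin ℓ) ℝ).symm (fun i => -(m i)))‖ =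
        Real.sqrt (∑ i, (x i + m i) ^ 2) := by
      rw [EuclideanSpace.norm_eq]
      congr 1
      refine Finset.sum_congr rfl fun i _ => ?_
      rw [Real.norm_eq_abs, sq_abs]
      congr 1
      show x i - (-(m i)) = x i + m i
      ring
    rw [this]
    rfl
  rw [hball μ', hball μ]
  apply GaussAnderson.gauss_aux g hg_anti hg_meas
  have hna : ‖((EuclideanSpace.equiv (Fin ℓ) ℝ).symm (fun i => -(μ i)))‖ =
      Real.sqrt (∑ i, (μ i)^2) := by
    rw [EuclideanSpace.norm_eq]
    congr 1
    refine Finset.sum_congr rfl fun i _ => ?_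
    rw [Real.norm_eq_abs]
    show |(-(μ i))| ^ 2 = _
    rw [abs_neg, sq_abs]
  have hnb : ‖((EuclideanSpace.equiv (Fin ℓ) ℝ).symm (fun i => -(μ' i)))‖ =
      Real.sqrt (∑ i, (μ' i)^2) := by
    rw [EuclideanSpace.norm_eq]
    congr 1
    refine Finset.sum_congr rfl fun i _ => ?_
    rw [Real.norm_eq_abs]
    show |(-(μ' i))| ^ 2 = _
    rw [abs_neg, sq_abs]
  rw [hna, hnb]
  exact hμ
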